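/- arXiv:2512.18327 — 2 statements merged into one kernel-verified Lean document; each statement's English description precedes it below -/
import Mathlib

section
/- Let K be a field, V a K-vector space, θ : V → V a K-linear endomorphism, F a finite set of pairwise distinct monic irreducible polynomials over K, and c : F → ℕ with c(f) ≥ 1 for all f ∈ F. Assume that for every f ∈ F one has ker((f^{c(f)})(θ)) = ker((f^{c(f)+1})(θ)) and range((f^{c(f)})(θ)) = range((f^{c(f)+1})(θ)). Then V decomposes as the internal direct sum V = range((∏_{f∈F} f^{c(f)})(θ)) ⊕ ⨁_{f∈F} ker((f^{c(f)})(θ)); in particular the submodules range((∏_{f∈F} f^{c(f)})(θ)) and ker((f^{c(f)})(θ)) for f ∈ F form an independent family whose sup is all of V. -/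
open Polynomial LinearMap

section Aux

variable {K V : Type*} [Field K] [AddCommGroup V] [Module K V] (θ : V →ₗ[K] V)

lemma aux_range_aeval_mul (p q : K[X]) :
    range (aeval θ (p * q)) = Submodule.map (aeval θ p) (range (aeval θ q)) := by
  rw [map_mul, Module.End.mul_eq_comp, LinearMap.range_comp]

lemma aux_ker_aeval_mul (p q : K[X]) :
    ker (aeval θ (p * q)) = Submodule.comap (aeval θ q) (ker (aeval θ p)) := by
  rw [map_mul, Module.End.mul_eq_comp, LinearMap.ker_comp]

lemma aux_ker_dvd {p q : K[X]} (h : p ∣ q) :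
    ker (aeval θ p) ≤ ker (aeval θ q) := by
  obtain ⟨r, rfl⟩ := h
  rw [mul_comm, aux_ker_aeval_mul]
  intro x hx
  simp only [Submodule.mem_comap, LinearMap.mem_ker.1 hx, map_zero, LinearMap.mem_ker]

lemma aux_ker_pow_stab {f : K[X]} {n : ℕ}
    (h : ker (aeval θ (f ^ n)) = ker (aeval θ (f ^ (n + 1)))) (k : ℕ) :
    ker (aeval θ (f ^ (n + k))) = ker (aeval θ (f ^ n)) := by
  induction k with
  | zero => rfl
  | succ k ih =>
    have h1 : f ^ (n + (k + 1)) = f ^ (n + 1) * f ^ k := by ring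
    have h2 : f ^ (n + k) = f ^ n * f ^ k := by ring
    rw [h1, aux_ker_aeval_mul, ← h, ← aux_ker_aeval_mul, ← h2, ih]

lemma aux_range_pow_stab {f : K[X]} {n : ℕ}
    (h : range (aeval θ (f ^ n)) = range (aeval θ (f ^ (n + 1)))) (k : ℕ) :
    range (aeval θ (f ^ (n + k))) = range (aeval θ (f ^ n)) := by
  induction k with
  | zero => rfl
  | succ k ih =>
    have h1 : f ^ (n + (k + 1)) = f * f ^ (n + k) := by ring
    have h2 : f ^ (n + 1) = f * f ^ n := by ring
    rw [h1, aux_range_aeval_mul, ih, ← aux_range_aeval_mul, ← h2, ← h]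

lemma aux_disjoint_range_ker (p : K[X])
    (h : ker (aeval θ (p * p)) ≤ ker (aeval θ p)) :
    Disjoint (range (aeval θ p)) (ker (aeval θ p)) := by
  rw [disjoint_iff_inf_le]
  rintro x ⟨hx1, hx2⟩
  obtain ⟨y, rfl⟩ := hx1
  have : y ∈ ker (aeval θ (p * p)) := by
    rw [LinearMap.mem_ker, map_mul, Module.End.mul_apply]
    exact hx2
  simpa using h this

lemma aux_sup_range_ker_eq_top (p : K[X])
    (h : range (aeval θ p) ≤ range (aeval θ (p * p))) :
    range (aeval θ p) ⊔ ker (aeval θ p) = ⊤ := by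
  rw [eq_top_iff]
  intro x _
  obtain ⟨y, hy⟩ := h ⟨x, rfl⟩
  rw [map_mul, Module.End.mul_apply] at hy
  refine Submodule.mem_sup.2 ⟨aeval θ p y, ⟨y, rfl⟩, x - aeval θ p y, ?_, by abel⟩
  rw [LinearMap.mem_ker, map_sub, hy, sub_self]

lemma aux_ker_le_range {p q : K[X]} (h : IsCoprime p q) :
    ker (aeval θ q) ≤ range (aeval θ p) := by
  obtain ⟨a, b, hab⟩ := h
  intro x hx
  have hx' : aeval θ (a * p + b * q) x = x := by rw [hab]; simp
  rw [map_add, LinearMap.add_apply, mul_comm a p, map_mul, map_mul,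
    Module.End.mul_apply, Module.End.mul_apply, LinearMap.mem_ker.1 hx, map_zero,
    add_zero] at hx'
  exact ⟨aeval θ a x, hx'⟩

lemma aux_ker_prod_le (S : Finset K[X]) (m : K[X] → ℕ)
    (hcop : ∀ f ∈ S, ∀ g ∈ S, f ≠ g → IsCoprime f g) :
    ker (aeval θ (∏ f ∈ S, f ^ m f)) ≤ ⨆ f ∈ S, ker (aeval θ (f ^ m f)) := by
  classical
  induction S using Finset.induction_on with
  | empty => simp [Module.End.one_eq_id]
  | @insert a T ha ih =>
    have hcop' : IsCoprime (a ^ m a) (∏ f ∈ T, f ^ m f) :=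
      IsCoprime.prod_right fun g hg =>
        (hcop a (Finset.mem_insert_self a T) g (Finset.mem_insert_of_mem hg)
          (fun hag => ha (hag ▸ hg))).pow
    rw [Finset.prod_insert ha, ← Polynomial.sup_ker_aeval_eq_ker_aeval_mul_of_coprime θ hcop',
      Finset.iSup_insert]
    exact sup_le_sup le_rfl (ih fun f hf g hg => hcop f (Finset.mem_insert_of_mem hf) g
      (Finset.mem_insert_of_mem hg))

lemma aux_range_prod_stab (S : Finset K[X]) (m : K[X] → ℕ)
    (h : ∀ f ∈ S, range (aeval θ (f ^ (2 * m f))) = range (aeval θ (f ^ m f))) :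
    range (aeval θ (∏ f ∈ S, f ^ (2 * m f))) = range (aeval θ (∏ f ∈ S, f ^ m f)) := by
  classical
  induction S using Finset.induction_on with
  | empty => rfl
  | @insert a T ha ih =>
    have hT : ∀ f ∈ T, range (aeval θ (f ^ (2 * m f))) = range (aeval θ (f ^ m f)) :=
      fun f hf => h f (Finset.mem_insert_of_mem hf)
    have haa := h a (Finset.mem_insert_self a T)
    rw [Finset.prod_insert ha, Finset.prod_insert ha, aux_range_aeval_mul, ih hT,
      ← aux_range_aeval_mul, mul_comm, aux_range_aeval_mul, haa,
      ← aux_range_aeval_mul, mul_comm]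

end Aux

/-- Fact 2.8: if `θ` is a `C`-endomorphism which is
`C`-image-complete for the kernel configuration given by `c` on the finite set
`F` of pairwise distinct monic irreducible polynomials, then
`V = Im(F^C) ⊕ ⨁_{f ∈ F} Ker(f^C)` as an internal direct sum: the family
consisting of `range((∏_{f∈F} f^{c f})(θ))` together with the
`ker((f^{c f})(θ))` for `f ∈ F` is independent with supremum `⊤`. -/
theorem image_complete_decomposition
    {K V : Type*} [Field K] [AddCommGroup V] [Module K V]
    (θ : V →ₗ[K] V) (F : Finset (Polynomial K))
    (hF : ∀ f ∈ F, f.Monic ∧ Irreducible f)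
    (c : Polynomial K → ℕ) (hc : ∀ f ∈ F, 1 ≤ c f)
    (hker : ∀ f ∈ F, LinearMap.ker (Polynomial.aeval θ (f ^ c f)) =
      LinearMap.ker (Polynomial.aeval θ (f ^ (c f + 1))))
    (hrange : ∀ f ∈ F, LinearMap.range (Polynomial.aeval θ (f ^ c f)) =
      LinearMap.range (Polynomial.aeval θ (f ^ (c f + 1)))) :
    iSupIndep (fun o : Option {f : Polynomial K // f ∈ F} =>
      Option.elim o
        (LinearMap.range (Polynomial.aeval θ (∏ f ∈ F, f ^ c f)))
        (fun f => LinearMap.ker (Polynomial.aeval θ (f.1 ^ c f.1)))) ∧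
    (⨆ o : Option {f : Polynomial K // f ∈ F},
      Option.elim o
        (LinearMap.range (Polynomial.aeval θ (∏ f ∈ F, f ^ c f)))
        (fun f => LinearMap.ker (Polynomial.aeval θ (f.1 ^ c f.1)))) = ⊤ := by
  classical
  set P : K[X] := ∏ f ∈ F, f ^ c f with hP
  -- pairwise coprimality
  have hcop : ∀ f ∈ F, ∀ g ∈ F, f ≠ g → IsCoprime f g := by
    intro f hf g hg hfg
    refine (hF f hf).2.coprime_iff_not_dvd.2 fun hdvd => hfg ?_
    exact Polynomial.eq_of_monic_of_associated (hF f hf).1 (hF g hg).1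
      ((hF f hf).2.associated_of_dvd (hF g hg).2 hdvd)
  -- kernel stabilization at double exponent
  have hker2 : ∀ f ∈ F, ker (aeval θ (f ^ (2 * c f))) = ker (aeval θ (f ^ c f)) := by
    intro f hf
    have := aux_ker_pow_stab θ (hker f hf) (c f)
    rwa [two_mul]
  have hrange2 : ∀ f ∈ F, range (aeval θ (f ^ (2 * c f))) = range (aeval θ (f ^ c f)) := by
    intro f hf
    have := aux_range_pow_stab θ (hrange f hf) (c f)
    rwa [two_mul]
  have hPP : P * P = ∏ f ∈ F, f ^ (2 * c f) := by
    rw [hP, ← Finset.prod_mul_distrib]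
    exact Finset.prod_congr rfl fun f _ => by ring
  -- ker (P*P) ≤ ker P
  have hkerPP : ker (aeval θ (P * P)) ≤ ker (aeval θ P) := by
    rw [hPP]
    refine (aux_ker_prod_le θ F (fun f => 2 * c f) hcop).trans ?_
    refine iSup₂_le fun f hf => ?_
    rw [hker2 f hf]
    exact aux_ker_dvd θ (Finset.dvd_prod_of_mem (fun g => g ^ c g) hf)
  -- range P ≤ range (P*P)
  have hrangePP : range (aeval θ P) ≤ range (aeval θ (P * P)) := by
    rw [hPP, aux_range_prod_stab θ F c hrange2]
  -- ker P ≤ ⨆ f ∈ F ker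
  have hkerP_le : ker (aeval θ P) ≤ ⨆ f ∈ F, ker (aeval θ (f ^ c f)) :=
    aux_ker_prod_le θ F c hcop
  constructor
  · intro o
    match o with
    | none =>
      refine Disjoint.mono_right ?_ (aux_disjoint_range_ker θ P hkerPP)
      refine iSup_le fun j => iSup_le fun hj => ?_
      match j with
      | none => exact absurd rfl hj
      | some f =>
        exact aux_ker_dvd θ (Finset.dvd_prod_of_mem (fun g => g ^ c g) f.2)
    | some f =>
      have hfF := f.2
      -- everything else lands in range (f ^ c f)
      have hother : (⨆ j, ⨆ (_ : j ≠ some f),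
          Option.elim j (range (aeval θ P))
            (fun g => ker (aeval θ (g.1 ^ c g.1)))) ≤ range (aeval θ (f.1 ^ c f.1)) := by
        refine iSup_le fun j => iSup_le fun hj => ?_
        match j with
        | none =>
          show range (aeval θ P) ≤ _
          rw [hP, ← Finset.mul_prod_erase F _ hfF, aux_range_aeval_mul]
          exact LinearMap.map_le_range
        | some g =>
          have hgf : g.1 ≠ f.1 := fun h => hj (congrArg some (Subtype.ext h))
          have hg_erase : g.1 ∈ F.erase f.1 := Finset.mem_erase.2 ⟨hgf, g.2⟩
          have hcopQ : IsCoprime (f.1 ^ c f.1) (∏ g ∈ F.erase f.1, g ^ c g) :=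
            IsCoprime.prod_right fun h hh =>
              (hcop f.1 hfF h (Finset.mem_of_mem_erase hh)
                (Ne.symm (Finset.mem_erase.1 hh).1)).pow
          refine le_trans ?_ (aux_ker_le_range θ hcopQ)
          exact aux_ker_dvd θ (Finset.dvd_prod_of_mem (fun g => g ^ c g) hg_erase)
      refine Disjoint.mono_right hother ?_
      refine (aux_disjoint_range_ker θ (f.1 ^ c f.1) ?_).symm
      rw [← pow_add, ← two_mul, hker2 f.1 hfF]
  · rw [iSup_option]
    rw [eq_top_iff, ← aux_sup_range_ker_eq_top θ P hrangePP]
    refine sup_le_sup le_rfl ?_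
    refine hkerP_le.trans ?_
    rw [iSup_subtype']
    exact le_rfl
end

section
/- Let K be a field, V' a K-vector space, V ⊆ V' a K-subspace such that the quotient V'/V has infinite dimension over K (Module.rank K (V'⧸V) ≥ ℵ₀), and let p ∈ K[X] be a monic polynomial of degree at least 1. If θ : V → V is a K-linear endomorphism with p(θ) = 0, then there exists a K-linear endomorphism θ' : V' → V' extending θ (θ'(v) = θ(v) for all v ∈ V) such that p(θ') = 0. -/
open Cardinal Polynomial

lemma exists_end_aeval_eq_zero {K W : Type*} [Field K] [AddCommGroup W] [Module K W]
    (hrank : Cardinal.aleph0 ≤ Module.rank K W)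
    (p : Polynomial K) (hmonic : p.Monic) (hdeg : 1 ≤ p.natDegree) :
    ∃ μ : W →ₗ[K] W, Polynomial.aeval μ p = 0 := by
  classical
  have hrankA : Module.rank K (AdjoinRoot p) = p.natDegree := by
    haveI := Module.Finite.of_basis (AdjoinRoot.powerBasis' hmonic).basis
    rw [← Module.finrank_eq_rank, (AdjoinRoot.powerBasis' hmonic).finrank]; rfl
  set ι := Module.Basis.ofVectorSpaceIndex K W
  have hι : #ι = Module.rank K W := (Module.Basis.ofVectorSpace K W).mk_eq_rank''
  have hinf : Cardinal.aleph0 ≤ #ι := hι ▸ hrank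
  have key : Nonempty (W ≃ₗ[K] (ι →₀ AdjoinRoot p)) := by
    apply nonempty_linearEquiv_of_lift_rank_eq
    rw [rank_finsupp K (AdjoinRoot p) ι, hrankA, ← hι]
    rw [Cardinal.lift_mul, Cardinal.lift_lift, Cardinal.lift_lift, Cardinal.lift_natCast]
    rw [Cardinal.mul_eq_left (by simpa using hinf) ((Cardinal.nat_lt_aleph0 _).le.trans (by simpa using hinf)) (Nat.cast_ne_zero.mpr (by omega))]
  obtain ⟨e⟩ := key
  let μ₀ : Module.End K (ι →₀ AdjoinRoot p) := Algebra.lsmul K K (ι →₀ AdjoinRoot p) (AdjoinRoot.root p)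
  refine ⟨e.symm.conjAlgEquiv K μ₀, ?_⟩
  have h0 : Polynomial.aeval μ₀ p = 0 := by
    rw [show μ₀ = Algebra.lsmul K K (ι →₀ AdjoinRoot p) (AdjoinRoot.root p) from rfl,
      Polynomial.aeval_algHom_apply, AdjoinRoot.aeval_eq, AdjoinRoot.mk_self, map_zero]
  rw [show e.symm.conjAlgEquiv K μ₀ = (e.symm.conjAlgEquiv K).toAlgHom μ₀ from rfl,
    Polynomial.aeval_algHom_apply, h0, map_zero]

/-- Standard Construction, algebraic case: a `K`-linear
endomorphism `θ` of a subspace `V ⊆ V'` with `p(θ) = 0`, where `p` is monic of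
degree at least `1` and `dim(V'/V) ≥ ℵ₀`, extends to a `K`-linear endomorphism
`θ'` of `V'` with `p(θ') = 0`. -/
theorem extend_endomorphism_algebraic
    {K V' : Type*} [Field K] [AddCommGroup V'] [Module K V']
    (V : Submodule K V')
    (hrank : Cardinal.aleph0 ≤ Module.rank K (V' ⧸ V))
    (p : Polynomial K) (hmonic : p.Monic) (hdeg : 1 ≤ p.natDegree)
    (θ : V →ₗ[K] V) (hθ : Polynomial.aeval θ p = 0) :
    ∃ θ' : V' →ₗ[K] V',
      (∀ v : V, θ' ↑v = ↑(θ v)) ∧ Polynomial.aeval θ' p = 0 := by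
  obtain ⟨W, hW⟩ := Submodule.exists_isCompl V
  have hrW : Cardinal.aleph0 ≤ Module.rank K W := by
    rw [← (Submodule.quotientEquivOfIsCompl V W hW).rank_eq]
    exact hrank
  obtain ⟨μ, hμ⟩ := exists_end_aeval_eq_zero hrW p hmonic hdeg
  let pe := Submodule.prodEquivOfIsCompl V W hW
  let F : Module.End K (V × W) := LinearMap.prodMapAlgHom K V W (θ, μ)
  have hpair : Polynomial.aeval ((θ, μ) : Module.End K V × Module.End K W) p = 0 := by
    ext1
    · rw [show (Polynomial.aeval ((θ, μ) : Module.End K ↥V × Module.End K ↥W) p).1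
        = (AlgHom.fst K _ _) (Polynomial.aeval ((θ, μ) : Module.End K ↥V × Module.End K ↥W) p) from rfl,
        ← Polynomial.aeval_algHom_apply]
      exact hθ
    · rw [show (Polynomial.aeval ((θ, μ) : Module.End K ↥V × Module.End K ↥W) p).2
        = (AlgHom.snd K _ _) (Polynomial.aeval ((θ, μ) : Module.End K ↥V × Module.End K ↥W) p) from rfl,
        ← Polynomial.aeval_algHom_apply]
      exact hμ
  have hF : Polynomial.aeval F p = 0 := by
    rw [show F = LinearMap.prodMapAlgHom K ↥V ↥W (θ, μ) from rfl,
      Polynomial.aeval_algHom_apply, hpair, map_zero]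
  refine ⟨pe.conjAlgEquiv K F, ?_, ?_⟩
  · intro v
    have h1 : pe.symm ↑v = ((v, 0) : V × W) :=
      Submodule.prodEquivOfIsCompl_symm_apply_left V W hW v
    show pe.conjAlgEquiv K F ↑v = ↑(θ v)
    have : pe.conjAlgEquiv K F ↑v = pe (F (pe.symm ↑v)) := rfl
    rw [this, h1]
    show pe (θ v, μ 0) = ↑(θ v)
    rw [map_zero]
    show (↑(θ v) + ↑(0 : W) : V') = ↑(θ v)
    simp
  · rw [show pe.conjAlgEquiv K F = (pe.conjAlgEquiv K).toAlgHom F from rfl,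
      Polynomial.aeval_algHom_apply, hF, map_zero]
end
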